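/- Suppose u, v : Ω → ℝ are C³ functions on an open set Ω ⊆ ℝ² satisfying the lightcone wave map system u_{xy} = u_x u_y/(u+v), v_{xy} = v_x v_y/(u+v), with u + v nowhere zero on Ω and ∂v/∂y nowhere zero on Ω. Then the two functions β₁ = (∂u/∂y)(∂v/∂y)/(u+v) and β₃ = (∂²v/∂y²)/(∂v/∂y) − (∂u/∂y)/(u+v) have identically vanishing partial derivative with respect to x on Ω; that is, β₁ and β₃ are first integrals of the x-characteristic system of the lightcone wave map system. -/

import Mathlib

/-- Partial derivative with respect to the first variable `x`. -/
noncomputable def pdx (f : ℝ × ℝ → ℝ) (p : ℝ × ℝ) : ℝ :=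
  deriv (fun x => f (x, p.2)) p.1

/-- Partial derivative with respect to the second variable `y`. -/
noncomputable def pdy (f : ℝ × ℝ → ℝ) (p : ℝ × ℝ) : ℝ :=
  deriv (fun y => f (p.1, y)) p.2

namespace LWMaux

lemma hasDerivAt_x (f : ℝ × ℝ → ℝ) (p : ℝ × ℝ) (hf : DifferentiableAt ℝ f p) :
    HasDerivAt (fun x => f (x, p.2)) (fderiv ℝ f p (1, 0)) p.1 := by
  have hline : HasDerivAt (fun x : ℝ => (x, p.2)) ((1 : ℝ), (0 : ℝ)) p.1 :=
    HasDerivAt.prodMk (hasDerivAt_id p.1) (hasDerivAt_const p.1 p.2)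
  have hfd : HasFDerivAt f (fderiv ℝ f p) (p.1, p.2) := by
    rw [Prod.mk.eta]; exact hf.hasFDerivAt
  exact hfd.comp_hasDerivAt p.1 hline

lemma hasDerivAt_y (f : ℝ × ℝ → ℝ) (p : ℝ × ℝ) (hf : DifferentiableAt ℝ f p) :
    HasDerivAt (fun y => f (p.1, y)) (fderiv ℝ f p (0, 1)) p.2 := by
  have hline : HasDerivAt (fun y : ℝ => (p.1, y)) ((0 : ℝ), (1 : ℝ)) p.2 :=
    HasDerivAt.prodMk (hasDerivAt_const p.2 p.1) (hasDerivAt_id p.2)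
  have hfd : HasFDerivAt f (fderiv ℝ f p) (p.1, p.2) := by
    rw [Prod.mk.eta]; exact hf.hasFDerivAt
  exact hfd.comp_hasDerivAt p.2 hline

lemma pdx_eq (f : ℝ × ℝ → ℝ) (p : ℝ × ℝ) (hf : DifferentiableAt ℝ f p) :
    pdx f p = fderiv ℝ f p (1, 0) :=
  (hasDerivAt_x f p hf).deriv

lemma pdy_eq (f : ℝ × ℝ → ℝ) (p : ℝ × ℝ) (hf : DifferentiableAt ℝ f p) :
    pdy f p = fderiv ℝ f p (0, 1) :=
  (hasDerivAt_y f p hf).deriv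

lemma mem_nhds_x {Ω : Set (ℝ × ℝ)} (hΩ : IsOpen Ω) {p : ℝ × ℝ} (hp : p ∈ Ω) :
    ∀ᶠ x in nhds p.1, (x, p.2) ∈ Ω := by
  have hc : ContinuousAt (fun x : ℝ => (x, p.2)) p.1 :=
    (continuous_id.prodMk continuous_const).continuousAt
  have : Ω ∈ nhds (p.1, p.2) := by rw [Prod.mk.eta]; exact hΩ.mem_nhds hp
  exact hc this

lemma mem_nhds_y {Ω : Set (ℝ × ℝ)} (hΩ : IsOpen Ω) {p : ℝ × ℝ} (hp : p ∈ Ω) :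
    ∀ᶠ y in nhds p.2, (p.1, y) ∈ Ω := by
  have hc : ContinuousAt (fun y : ℝ => (p.1, y)) p.2 :=
    (continuous_const.prodMk continuous_id).continuousAt
  have : Ω ∈ nhds (p.1, p.2) := by rw [Prod.mk.eta]; exact hΩ.mem_nhds hp
  exact hc this

lemma pdx_congr {Ω : Set (ℝ × ℝ)} (hΩ : IsOpen Ω) {p : ℝ × ℝ} (hp : p ∈ Ω)
    {f g : ℝ × ℝ → ℝ} (h : ∀ q ∈ Ω, f q = g q) : pdx f p = pdx g p := by
  apply Filter.EventuallyEq.deriv_eq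
  filter_upwards [mem_nhds_x hΩ hp] with x hx using h _ hx

lemma pdy_congr {Ω : Set (ℝ × ℝ)} (hΩ : IsOpen Ω) {p : ℝ × ℝ} (hp : p ∈ Ω)
    {f g : ℝ × ℝ → ℝ} (h : ∀ q ∈ Ω, f q = g q) : pdy f p = pdy g p := by
  apply Filter.EventuallyEq.deriv_eq
  filter_upwards [mem_nhds_y hΩ hp] with y hy using h _ hy

lemma hasDerivAt_x_congr {Ω : Set (ℝ × ℝ)} (hΩ : IsOpen Ω) {p : ℝ × ℝ} (hp : p ∈ Ω)
    {f g : ℝ × ℝ → ℝ} (h : ∀ q ∈ Ω, f q = g q) (hg : DifferentiableAt ℝ g p) :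
    HasDerivAt (fun x => f (x, p.2)) (pdx f p) p.1 := by
  have hev : (fun x => g (x, p.2)) =ᶠ[nhds p.1] (fun x => f (x, p.2)) := by
    filter_upwards [mem_nhds_x hΩ hp] with x hx using (h _ hx).symm
  have hgd := hasDerivAt_x g p hg
  have := hgd.congr_of_eventuallyEq hev.symm
  have hval : pdx f p = fderiv ℝ g p (1, 0) := by
    rw [pdx_congr hΩ hp h, pdx_eq g p hg]
  rwa [hval]

lemma hasDerivAt_y_congr {Ω : Set (ℝ × ℝ)} (hΩ : IsOpen Ω) {p : ℝ × ℝ} (hp : p ∈ Ω)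
    {f g : ℝ × ℝ → ℝ} (h : ∀ q ∈ Ω, f q = g q) (hg : DifferentiableAt ℝ g p) :
    HasDerivAt (fun y => f (p.1, y)) (pdy f p) p.2 := by
  have hev : (fun y => g (p.1, y)) =ᶠ[nhds p.2] (fun y => f (p.1, y)) := by
    filter_upwards [mem_nhds_y hΩ hp] with y hy using (h _ hy).symm
  have hgd := hasDerivAt_y g p hg
  have := hgd.congr_of_eventuallyEq hev.symm
  have hval : pdy f p = fderiv ℝ g p (0, 1) := by
    rw [pdy_congr hΩ hp h, pdy_eq g p hg]
  rwa [hval]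

/-- the fderiv applied to a fixed vector, C^m on Ω for C^{m+1} functions -/
lemma contDiffOn_fderiv_apply {Ω : Set (ℝ × ℝ)} (hΩ : IsOpen Ω)
    {f : ℝ × ℝ → ℝ} {n m : WithTop ℕ∞} (hf : ContDiffOn ℝ n f Ω) (hmn : m + 1 ≤ n) (w : ℝ × ℝ) :
    ContDiffOn ℝ m (fun q => fderiv ℝ f q w) Ω :=
  (hf.fderiv_of_isOpen hΩ hmn).clm_apply contDiffOn_const

lemma pdy_eq_on {Ω : Set (ℝ × ℝ)} (hΩ : IsOpen Ω) {f : ℝ × ℝ → ℝ}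
    (hf : DifferentiableOn ℝ f Ω) :
    ∀ q ∈ Ω, pdy f q = fderiv ℝ f q (0, 1) := fun q hq =>
  pdy_eq f q ((hf q hq).differentiableAt (hΩ.mem_nhds hq))

lemma pdx_eq_on {Ω : Set (ℝ × ℝ)} (hΩ : IsOpen Ω) {f : ℝ × ℝ → ℝ}
    (hf : DifferentiableOn ℝ f Ω) :
    ∀ q ∈ Ω, pdx f q = fderiv ℝ f q (1, 0) := fun q hq =>
  pdx_eq f q ((hf q hq).differentiableAt (hΩ.mem_nhds hq))

/-- symmetry of mixed partials for C² functions on an open set -/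
lemma pdxy_symm {Ω : Set (ℝ × ℝ)} (hΩ : IsOpen Ω) {p : ℝ × ℝ} (hp : p ∈ Ω)
    {f : ℝ × ℝ → ℝ} (hf : ContDiffOn ℝ 2 f Ω) :
    pdx (pdy f) p = pdy (pdx f) p := by
  have hdiff : DifferentiableOn ℝ f Ω := hf.differentiableOn two_ne_zero
  have hf' : ContDiffOn ℝ 1 (fderiv ℝ f) Ω := hf.fderiv_of_isOpen hΩ le_rfl
  have hf'd : DifferentiableAt ℝ (fderiv ℝ f) p :=
    ((hf'.differentiableOn one_ne_zero) p hp).differentiableAt (hΩ.mem_nhds hp)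
  have hsymm : ∀ w z : ℝ × ℝ, fderiv ℝ (fderiv ℝ f) p w z = fderiv ℝ (fderiv ℝ f) p z w := by
    intro w z
    apply second_derivative_symmetric_of_eventually (f := f) (x := p)
    · filter_upwards [hΩ.mem_nhds hp] with q hq using
        ((hdiff q hq).differentiableAt (hΩ.mem_nhds hq)).hasFDerivAt
    · exact hf'd.hasFDerivAt
  have hg2 : DifferentiableAt ℝ (fun q => fderiv ℝ f q (0, 1)) p :=
    (((contDiffOn_fderiv_apply (m := 1) hΩ hf le_rfl (0, 1)).differentiableOn one_ne_zero) p hp).differentiableAt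
      (hΩ.mem_nhds hp)
  have hg1 : DifferentiableAt ℝ (fun q => fderiv ℝ f q (1, 0)) p :=
    (((contDiffOn_fderiv_apply (m := 1) hΩ hf le_rfl (1, 0)).differentiableOn one_ne_zero) p hp).differentiableAt
      (hΩ.mem_nhds hp)
  have e1 : pdx (pdy f) p = fderiv ℝ (fderiv ℝ f) p (1, 0) (0, 1) := by
    rw [pdx_congr hΩ hp (pdy_eq_on hΩ hdiff), pdx_eq _ p hg2,
      fderiv_clm_apply hf'd (differentiableAt_const _)]
    simp
  have e2 : pdy (pdx f) p = fderiv ℝ (fderiv ℝ f) p (0, 1) (1, 0) := by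
    rw [pdy_congr hΩ hp (pdx_eq_on hΩ hdiff), pdy_eq _ p hg1,
      fderiv_clm_apply hf'd (differentiableAt_const _)]
    simp
  rw [e1, e2, hsymm]

/-- For a C² function, the x-line restriction of pdy f has derivative pdx (pdy f). -/
lemma hasDerivAt_pdy_x {Ω : Set (ℝ × ℝ)} (hΩ : IsOpen Ω) {p : ℝ × ℝ} (hp : p ∈ Ω)
    {f : ℝ × ℝ → ℝ} (hf : ContDiffOn ℝ 2 f Ω) :
    HasDerivAt (fun x => pdy f (x, p.2)) (pdx (pdy f) p) p.1 := by
  have hdiff : DifferentiableOn ℝ f Ω := hf.differentiableOn two_ne_zero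
  have hg : DifferentiableAt ℝ (fun q => fderiv ℝ f q (0, 1)) p :=
    (((contDiffOn_fderiv_apply (m := 1) hΩ hf le_rfl (0, 1)).differentiableOn one_ne_zero) p hp).differentiableAt
      (hΩ.mem_nhds hp)
  exact hasDerivAt_x_congr hΩ hp (pdy_eq_on hΩ hdiff) hg

lemma hasDerivAt_pdy_y {Ω : Set (ℝ × ℝ)} (hΩ : IsOpen Ω) {p : ℝ × ℝ} (hp : p ∈ Ω)
    {f : ℝ × ℝ → ℝ} (hf : ContDiffOn ℝ 2 f Ω) :
    HasDerivAt (fun y => pdy f (p.1, y)) (pdy (pdy f) p) p.2 := by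
  have hdiff : DifferentiableOn ℝ f Ω := hf.differentiableOn two_ne_zero
  have hg : DifferentiableAt ℝ (fun q => fderiv ℝ f q (0, 1)) p :=
    (((contDiffOn_fderiv_apply (m := 1) hΩ hf le_rfl (0, 1)).differentiableOn one_ne_zero) p hp).differentiableAt
      (hΩ.mem_nhds hp)
  exact hasDerivAt_y_congr hΩ hp (pdy_eq_on hΩ hdiff) hg

lemma hasDerivAt_pdx_y {Ω : Set (ℝ × ℝ)} (hΩ : IsOpen Ω) {p : ℝ × ℝ} (hp : p ∈ Ω)
    {f : ℝ × ℝ → ℝ} (hf : ContDiffOn ℝ 2 f Ω) :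
    HasDerivAt (fun y => pdx f (p.1, y)) (pdy (pdx f) p) p.2 := by
  have hdiff : DifferentiableOn ℝ f Ω := hf.differentiableOn two_ne_zero
  have hg : DifferentiableAt ℝ (fun q => fderiv ℝ f q (1, 0)) p :=
    (((contDiffOn_fderiv_apply (m := 1) hΩ hf le_rfl (1, 0)).differentiableOn one_ne_zero) p hp).differentiableAt
      (hΩ.mem_nhds hp)
  exact hasDerivAt_y_congr hΩ hp (pdx_eq_on hΩ hdiff) hg

/-- pdy f agrees on Ω with the C² function q ↦ fderiv f q (0,1), for f C³. -/
lemma pdy_pdy_eq_on {Ω : Set (ℝ × ℝ)} (hΩ : IsOpen Ω) {f : ℝ × ℝ → ℝ}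
    (hf : ContDiffOn ℝ 3 f Ω) :
    ∀ q ∈ Ω, pdy (pdy f) q = pdy (fun q' => fderiv ℝ f q' (0, 1)) q := fun q hq =>
  pdy_congr hΩ hq (pdy_eq_on hΩ (hf.differentiableOn (by norm_num)))

/-- For a C³ function, the x-line restriction of pdy (pdy f) has derivative
pdx (pdy (pdy f)). -/
lemma hasDerivAt_pdypdy_x {Ω : Set (ℝ × ℝ)} (hΩ : IsOpen Ω) {p : ℝ × ℝ} (hp : p ∈ Ω)
    {f : ℝ × ℝ → ℝ} (hf : ContDiffOn ℝ 3 f Ω) :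
    HasDerivAt (fun x => pdy (pdy f) (x, p.2)) (pdx (pdy (pdy f)) p) p.1 := by
  set g : ℝ × ℝ → ℝ := fun q => fderiv ℝ f q (0, 1) with hgdef
  have hg2 : ContDiffOn ℝ 2 g Ω := contDiffOn_fderiv_apply hΩ hf (by norm_num) (0, 1)
  have heq : ∀ q ∈ Ω, pdy (pdy f) q = pdy g q := pdy_pdy_eq_on hΩ hf
  have heq2 : ∀ q ∈ Ω, pdy g q = fderiv ℝ g q (0, 1) :=
    pdy_eq_on hΩ (hg2.differentiableOn two_ne_zero)
  have heq3 : ∀ q ∈ Ω, pdy (pdy f) q = fderiv ℝ g q (0, 1) := fun q hq =>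
    (heq q hq).trans (heq2 q hq)
  have hd : DifferentiableAt ℝ (fun q => fderiv ℝ g q (0, 1)) p :=
    (((contDiffOn_fderiv_apply (m := 1) hΩ hg2 le_rfl (0, 1)).differentiableOn one_ne_zero) p hp).differentiableAt
      (hΩ.mem_nhds hp)
  exact hasDerivAt_x_congr hΩ hp heq3 hd

end LWMaux

open LWMaux in
/-- for a C³ solution of the lightcone wave map system with `u+v` and `v_y`
nowhere zero, the functions `β₁ = u_y v_y/(u+v)` and `β₃ = v_{yy}/v_y − u_y/(u+v)` are
first integrals of the `x`-characteristic system: their `x`-partial derivatives vanish. -/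
theorem firstIntegrals_x_characteristics
    (Ω : Set (ℝ × ℝ)) (hΩ : IsOpen Ω) (u v : ℝ × ℝ → ℝ)
    (hu : ContDiffOn ℝ 3 u Ω) (hv : ContDiffOn ℝ 3 v Ω)
    (hsum : ∀ p ∈ Ω, u p + v p ≠ 0)
    (hvy : ∀ p ∈ Ω, pdy v p ≠ 0)
    (hueq : ∀ p ∈ Ω, pdx (pdy u) p = pdx u p * pdy u p / (u p + v p))
    (hveq : ∀ p ∈ Ω, pdx (pdy v) p = pdx v p * pdy v p / (u p + v p)) :
    (∀ p ∈ Ω, pdx (fun q => pdy u q * pdy v q / (u q + v q)) p = 0) ∧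
    (∀ p ∈ Ω, pdx (fun q => pdy (pdy v) q / pdy v q - pdy u q / (u q + v q)) p = 0) := by
  have hu2 : ContDiffOn ℝ 2 u Ω := hu.of_le (by norm_num)
  have hv2 : ContDiffOn ℝ 2 v Ω := hv.of_le (by norm_num)
  have hud : DifferentiableOn ℝ u Ω := hu.differentiableOn (by norm_num)
  have hvd : DifferentiableOn ℝ v Ω := hv.differentiableOn (by norm_num)
  -- abbreviations at a point p ∈ Ω
  constructor
  · -- β₁
    intro p hp
    set s := u p + v p with hs
    have hs0 : s ≠ 0 := hsum p hp
    have hUx : HasDerivAt (fun x => u (x, p.2)) (pdx u p) p.1 := by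
      have := hasDerivAt_x u p ((hud p hp).differentiableAt (hΩ.mem_nhds hp))
      rwa [← pdx_eq u p ((hud p hp).differentiableAt (hΩ.mem_nhds hp))] at this
    have hVx : HasDerivAt (fun x => v (x, p.2)) (pdx v p) p.1 := by
      have := hasDerivAt_x v p ((hvd p hp).differentiableAt (hΩ.mem_nhds hp))
      rwa [← pdx_eq v p ((hvd p hp).differentiableAt (hΩ.mem_nhds hp))] at this
    have hUy : HasDerivAt (fun x => pdy u (x, p.2)) (pdx (pdy u) p) p.1 :=
      hasDerivAt_pdy_x hΩ hp hu2
    have hVy : HasDerivAt (fun x => pdy v (x, p.2)) (pdx (pdy v) p) p.1 :=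
      hasDerivAt_pdy_x hΩ hp hv2
    have hcomb : HasDerivAt (fun x => pdy u (x, p.2) * pdy v (x, p.2) / (u (x, p.2) + v (x, p.2)))
        (((pdx (pdy u) p * pdy v p + pdy u p * pdx (pdy v) p) * s
          - pdy u p * pdy v p * (pdx u p + pdx v p)) / s ^ 2) p.1 :=
      (hUy.mul hVy).div (hUx.add hVx) hs0
    have : pdx (fun q => pdy u q * pdy v q / (u q + v q)) p
        = ((pdx (pdy u) p * pdy v p + pdy u p * pdx (pdy v) p) * s
          - pdy u p * pdy v p * (pdx u p + pdx v p)) / s ^ 2 := hcomb.deriv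
    rw [this, hueq p hp, hveq p hp, ← hs]
    field_simp
    ring
  · -- β₃
    intro p hp
    set s := u p + v p with hs
    have hs0 : s ≠ 0 := hsum p hp
    have hvy0 : pdy v p ≠ 0 := hvy p hp
    -- compute pdx (pdy (pdy v)) p via symmetry and the PDE
    set g : ℝ × ℝ → ℝ := fun q => fderiv ℝ v q (0, 1) with hgdef
    have hg2 : ContDiffOn ℝ 2 g Ω := contDiffOn_fderiv_apply hΩ hv (by norm_num) (0, 1)
    have hgeq : ∀ q ∈ Ω, pdy v q = g q := pdy_eq_on hΩ hvd
    -- symmetry for g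
    have hsymmg : pdx (pdy g) p = pdy (pdx g) p := pdxy_symm hΩ hp hg2
    -- symmetry for v
    have hsymmv : pdy (pdx v) p = pdx (pdy v) p := (pdxy_symm hΩ hp hv2).symm
    -- transfer: pdx (pdy (pdy v)) p = pdy (pdx (pdy v)) p
    have t1 : ∀ q ∈ Ω, pdy (pdy v) q = pdy g q := fun q hq => pdy_congr hΩ hq hgeq
    have t2 : ∀ q ∈ Ω, pdx (pdy v) q = pdx g q := fun q hq => pdx_congr hΩ hq hgeq
    have key : pdx (pdy (pdy v)) p = pdy (pdx (pdy v)) p := by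
      rw [pdx_congr hΩ hp t1, pdy_congr hΩ hp t2, hsymmg]
    -- compute pdy (pdx (pdy v)) p using the PDE for v
    have hUyy : HasDerivAt (fun y => u (p.1, y)) (pdy u p) p.2 := by
      have hd := (hud p hp).differentiableAt (hΩ.mem_nhds hp)
      have := hasDerivAt_y u p hd
      rwa [← pdy_eq u p hd] at this
    have hVyy : HasDerivAt (fun y => v (p.1, y)) (pdy v p) p.2 := by
      have hd := (hvd p hp).differentiableAt (hΩ.mem_nhds hp)
      have := hasDerivAt_y v p hd
      rwa [← pdy_eq v p hd] at this
    have hVxy : HasDerivAt (fun y => pdx v (p.1, y)) (pdy (pdx v) p) p.2 :=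
      hasDerivAt_pdx_y hΩ hp hv2
    have hVyy2 : HasDerivAt (fun y => pdy v (p.1, y)) (pdy (pdy v) p) p.2 :=
      hasDerivAt_pdy_y hΩ hp hv2
    have hprod : HasDerivAt
        (fun y => pdx v (p.1, y) * pdy v (p.1, y) / (u (p.1, y) + v (p.1, y)))
        (((pdy (pdx v) p * pdy v p + pdx v p * pdy (pdy v) p) * s
          - pdx v p * pdy v p * (pdy u p + pdy v p)) / s ^ 2) p.2 :=
      (hVxy.mul hVyy2).div (hUyy.add hVyy) hs0
    have hW : pdy (pdx (pdy v)) p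
        = ((pdy (pdx v) p * pdy v p + pdx v p * pdy (pdy v) p) * s
          - pdx v p * pdy v p * (pdy u p + pdy v p)) / s ^ 2 := by
      have hcon : pdy (pdx (pdy v)) p
          = pdy (fun q => pdx v q * pdy v q / (u q + v q)) p :=
        pdy_congr hΩ hp hveq
      rw [hcon]
      exact hprod.deriv
    -- x-direction derivatives for the final combination
    have hUx : HasDerivAt (fun x => u (x, p.2)) (pdx u p) p.1 := by
      have hd := (hud p hp).differentiableAt (hΩ.mem_nhds hp)
      have := hasDerivAt_x u p hd
      rwa [← pdx_eq u p hd] at this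
    have hVx : HasDerivAt (fun x => v (x, p.2)) (pdx v p) p.1 := by
      have hd := (hvd p hp).differentiableAt (hΩ.mem_nhds hp)
      have := hasDerivAt_x v p hd
      rwa [← pdx_eq v p hd] at this
    have hUy : HasDerivAt (fun x => pdy u (x, p.2)) (pdx (pdy u) p) p.1 :=
      hasDerivAt_pdy_x hΩ hp hu2
    have hVy : HasDerivAt (fun x => pdy v (x, p.2)) (pdx (pdy v) p) p.1 :=
      hasDerivAt_pdy_x hΩ hp hv2
    have hVyy_x : HasDerivAt (fun x => pdy (pdy v) (x, p.2)) (pdx (pdy (pdy v)) p) p.1 :=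
      hasDerivAt_pdypdy_x hΩ hp hv
    have hcomb : HasDerivAt
        (fun x => pdy (pdy v) (x, p.2) / pdy v (x, p.2)
          - pdy u (x, p.2) / (u (x, p.2) + v (x, p.2)))
        ((pdx (pdy (pdy v)) p * pdy v p - pdy (pdy v) p * pdx (pdy v) p) / pdy v p ^ 2
          - (pdx (pdy u) p * s - pdy u p * (pdx u p + pdx v p)) / s ^ 2) p.1 :=
      (hVyy_x.div hVy hvy0).sub (hUy.div (hUx.add hVx) hs0)
    have heval : pdx (fun q => pdy (pdy v) q / pdy v q - pdy u q / (u q + v q)) p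
        = (pdx (pdy (pdy v)) p * pdy v p - pdy (pdy v) p * pdx (pdy v) p) / pdy v p ^ 2
          - (pdx (pdy u) p * s - pdy u p * (pdx u p + pdx v p)) / s ^ 2 := hcomb.deriv
    rw [heval, key, hW, hsymmv, hueq p hp, hveq p hp, ← hs]
    field_simp
    ring
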